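/- Let 1 < q < ∞ and let α, μ be reals with 0 < 2μ < α, and let (c_j)_{j∈ℤ} be nonnegative extended reals. Then there is a constant C, depending only on q, α and μ, such that sup_{L∈ℤ} 2^{−Lμq} ∑_{k ≤ L} 2^{kαq} ( ∑_{j ≥ k} c_j 2^{−jα} )^{q} ≤ C · sup_{L∈ℤ} 2^{−Lμq} ∑_{j ≤ L} c_j^{q}. -/
import Mathlib
open scoped ENNReal

def eqAbove (k : ℤ) : ℕ ≃ {j : ℤ // k ≤ j} where
  toFun n := ⟨k + n, by omega⟩
  invFun j := (j.1 - k).toNat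
  left_inv n := by simp
  right_inv j := by ext; simp only []; have := j.2; simp [Int.toNat_of_nonneg (by omega : (0:ℤ) ≤ j.1 - k)]

def eqBelow (L : ℤ) : ℕ ≃ {j : ℤ // j ≤ L} where
  toFun n := ⟨L - n, by omega⟩
  invFun j := (L - j.1).toNat
  left_inv n := by simp
  right_inv j := by ext; simp only []; have := j.2; simp [Int.toNat_of_nonneg (by omega : (0:ℤ) ≤ L - j.1)]

lemma geom_nat (a s : ℝ) (hs : s < 0) :
    ∑' n : ℕ, ENNReal.ofReal ((2:ℝ) ^ (a + (n:ℝ) * s)) =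
      ENNReal.ofReal ((2:ℝ) ^ a * (1 - (2:ℝ) ^ s)⁻¹) := by
  have h2 : (0:ℝ) < 2 := by norm_num
  have hlt : (2:ℝ) ^ s < 1 := Real.rpow_lt_one_of_one_lt_of_neg (by norm_num) hs
  have hpos : (0:ℝ) < (2:ℝ) ^ s := Real.rpow_pos_of_pos h2 s
  have hterm : ∀ n : ℕ, ENNReal.ofReal ((2:ℝ) ^ (a + (n:ℝ) * s)) =
      ENNReal.ofReal ((2:ℝ) ^ a) * (ENNReal.ofReal ((2:ℝ) ^ s)) ^ n := by
    intro n
    rw [Real.rpow_add h2, ENNReal.ofReal_mul (by positivity)]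
    congr 1
    rw [mul_comm (n:ℝ) s, Real.rpow_mul (le_of_lt h2), Real.rpow_natCast,
      ENNReal.ofReal_pow (le_of_lt hpos)]
  rw [tsum_congr hterm, ENNReal.tsum_mul_left, ENNReal.tsum_geometric,
    ENNReal.ofReal_mul (by positivity)]
  congr 1
  rw [ENNReal.ofReal_inv_of_pos (by linarith), ENNReal.ofReal_sub _ (le_of_lt hpos),
    ENNReal.ofReal_one]

lemma geom_above (t : ℝ) (ht : t < 0) (k : ℤ) :
    ∑' j : {j : ℤ // k ≤ j}, ENNReal.ofReal ((2:ℝ) ^ ((j.1:ℝ) * t)) =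
      ENNReal.ofReal ((2:ℝ) ^ ((k:ℝ) * t) * (1 - (2:ℝ) ^ t)⁻¹) := by
  rw [← (eqAbove k).tsum_eq (fun j => ENNReal.ofReal ((2:ℝ) ^ ((j.1:ℝ) * t)))]
  rw [← geom_nat ((k:ℝ) * t) t ht]
  apply tsum_congr; intro n
  congr 1
  show (2:ℝ) ^ (((k + (n:ℤ) : ℤ) : ℝ) * t) = _
  push_cast
  ring_nf

lemma geom_below (t : ℝ) (ht : 0 < t) (L : ℤ) :
    ∑' k : {k : ℤ // k ≤ L}, ENNReal.ofReal ((2:ℝ) ^ ((k.1:ℝ) * t)) =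
      ENNReal.ofReal ((2:ℝ) ^ ((L:ℝ) * t) * (1 - (2:ℝ) ^ (-t))⁻¹) := by
  rw [← (eqBelow L).tsum_eq (fun j => ENNReal.ofReal ((2:ℝ) ^ ((j.1:ℝ) * t)))]
  rw [← geom_nat ((L:ℝ) * t) (-t) (by linarith)]
  apply tsum_congr; intro n
  congr 1
  show (2:ℝ) ^ (((L - (n:ℤ) : ℤ) : ℝ) * t) = _
  push_cast
  ring_nf

set_option maxHeartbeats 1000000 in
theorem stmt_5 (q α μ : ℝ) (hq1 : 1 < q) (hμ0 : 0 < μ) (hμα : 2 * μ < α)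
    (c : ℤ → ℝ≥0∞) :
    ∃ C : ℝ, 0 < C ∧
      (⨆ L : ℤ, ENNReal.ofReal ((2 : ℝ) ^ (-(L : ℝ) * μ * q)) *
          ∑' k : {k : ℤ // k ≤ L},
            ENNReal.ofReal ((2 : ℝ) ^ ((k.1 : ℝ) * α * q)) *
              (∑' j : {j : ℤ // (k : ℤ) ≤ j},
                  c j.1 * ENNReal.ofReal ((2 : ℝ) ^ (-(j.1 : ℝ) * α))) ^ q) ≤
        ENNReal.ofReal C *
          ⨆ L : ℤ, ENNReal.ofReal ((2 : ℝ) ^ (-(L : ℝ) * μ * q)) *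
            ∑' j : {j : ℤ // j ≤ L}, c j.1 ^ q := by
  have h2 : (0:ℝ) < 2 := by norm_num
  have hq0 : (0:ℝ) < q := by linarith
  have hμα' : μ - α < 0 := by linarith
  have hμq : 0 < μ * q := by positivity
  have h1lt : (2:ℝ) ^ (μ - α) < 1 := Real.rpow_lt_one_of_one_lt_of_neg (by norm_num) hμα'
  have h1pos : (0:ℝ) < 1 - (2:ℝ) ^ (μ - α) := by
    have := Real.rpow_pos_of_pos h2 (μ - α); linarith
  have h2lt : (2:ℝ) ^ (-(μ * q)) < 1 :=
    Real.rpow_lt_one_of_one_lt_of_neg (by norm_num) (by linarith)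
  set D : ℝ := ((1 - (2:ℝ) ^ (μ - α))⁻¹) ^ q with hD
  set E : ℝ := (1 - (2:ℝ) ^ (-(μ * q)))⁻¹ with hE
  have hDpos : 0 < D := Real.rpow_pos_of_pos (inv_pos.mpr h1pos) q
  have hEpos : 0 < E := inv_pos.mpr (by linarith)
  refine ⟨D * E, by positivity, ?_⟩
  set S := ⨆ L : ℤ, ENNReal.ofReal ((2 : ℝ) ^ (-(L : ℝ) * μ * q)) *
      ∑' j : {j : ℤ // j ≤ L}, c j.1 ^ q with hSdef
  by_cases hStop : S = ⊤
  · rw [hStop, ENNReal.mul_top (ne_of_gt (ENNReal.ofReal_pos.mpr (by positivity)))]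
    exact le_top
  have hSle : ∀ L : ℤ, ENNReal.ofReal ((2:ℝ) ^ (-(L:ℝ) * μ * q)) *
      ∑' j : {j : ℤ // j ≤ L}, c j.1 ^ q ≤ S := fun L =>
    le_iSup (fun L : ℤ => ENNReal.ofReal ((2:ℝ) ^ (-(L:ℝ) * μ * q)) *
      ∑' j : {j : ℤ // j ≤ L}, c j.1 ^ q) L
  have step1 : ∀ j : ℤ, c j ^ q ≤ ENNReal.ofReal ((2:ℝ) ^ ((j:ℝ) * μ * q)) * S := by
    intro j
    have h0 : c j ^ q ≤ ∑' j' : {j' : ℤ // j' ≤ j}, c j'.1 ^ q :=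
      ENNReal.le_tsum (⟨j, le_rfl⟩ : {j' : ℤ // j' ≤ j})
    calc c j ^ q
        = ENNReal.ofReal ((2:ℝ) ^ ((j:ℝ) * μ * q)) *
            (ENNReal.ofReal ((2:ℝ) ^ (-(j:ℝ) * μ * q)) * c j ^ q) := by
          rw [← mul_assoc, ← ENNReal.ofReal_mul (by positivity), ← Real.rpow_add h2]
          have he : (j:ℝ) * μ * q + -(j:ℝ) * μ * q = 0 := by ring
          rw [he, Real.rpow_zero, ENNReal.ofReal_one, one_mul]
      _ ≤ ENNReal.ofReal ((2:ℝ) ^ ((j:ℝ) * μ * q)) *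
            (ENNReal.ofReal ((2:ℝ) ^ (-(j:ℝ) * μ * q)) *
              ∑' j' : {j' : ℤ // j' ≤ j}, c j'.1 ^ q) :=
          mul_le_mul_right (mul_le_mul_right h0 _) _
      _ ≤ ENNReal.ofReal ((2:ℝ) ^ ((j:ℝ) * μ * q)) * S := mul_le_mul_right (hSle j) _
  have step2 : ∀ j : ℤ, c j ≤ ENNReal.ofReal ((2:ℝ) ^ ((j:ℝ) * μ)) * S ^ q⁻¹ := by
    intro j
    have h := ENNReal.rpow_le_rpow (step1 j) (by positivity : (0:ℝ) ≤ q⁻¹)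
    rw [← ENNReal.rpow_mul, mul_inv_cancel₀ (ne_of_gt hq0), ENNReal.rpow_one,
      ENNReal.mul_rpow_of_nonneg _ _ (by positivity),
      ENNReal.ofReal_rpow_of_pos (by positivity),
      ← Real.rpow_mul (le_of_lt h2)] at h
    have he : (j:ℝ) * μ * q * q⁻¹ = (j:ℝ) * μ := by field_simp
    rwa [he] at h
  have step3 : ∀ k : ℤ,
      (∑' j : {j : ℤ // k ≤ j}, c j.1 * ENNReal.ofReal ((2:ℝ) ^ (-(j.1:ℝ) * α))) ≤
        S ^ q⁻¹ * ENNReal.ofReal ((2:ℝ) ^ ((k:ℝ) * (μ - α)) * (1 - (2:ℝ) ^ (μ - α))⁻¹) := by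
    intro k
    have hterm : ∀ j : {j : ℤ // k ≤ j},
        c j.1 * ENNReal.ofReal ((2:ℝ) ^ (-(j.1:ℝ) * α)) ≤
          S ^ q⁻¹ * ENNReal.ofReal ((2:ℝ) ^ ((j.1:ℝ) * (μ - α))) := by
      intro j
      calc c j.1 * ENNReal.ofReal ((2:ℝ) ^ (-(j.1:ℝ) * α))
          ≤ (ENNReal.ofReal ((2:ℝ) ^ ((j.1:ℝ) * μ)) * S ^ q⁻¹) *
              ENNReal.ofReal ((2:ℝ) ^ (-(j.1:ℝ) * α)) := mul_le_mul_left (step2 j.1) _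
        _ = S ^ q⁻¹ * (ENNReal.ofReal ((2:ℝ) ^ ((j.1:ℝ) * μ)) *
              ENNReal.ofReal ((2:ℝ) ^ (-(j.1:ℝ) * α))) := by
            rw [mul_comm (ENNReal.ofReal ((2:ℝ) ^ ((j.1:ℝ) * μ))) (S ^ q⁻¹), mul_assoc]
        _ = S ^ q⁻¹ * ENNReal.ofReal ((2:ℝ) ^ ((j.1:ℝ) * (μ - α))) := by
            rw [← ENNReal.ofReal_mul (by positivity), ← Real.rpow_add h2]
            congr 2
            ring_nf
    calc (∑' j : {j : ℤ // k ≤ j}, c j.1 * ENNReal.ofReal ((2:ℝ) ^ (-(j.1:ℝ) * α)))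
        ≤ ∑' j : {j : ℤ // k ≤ j}, S ^ q⁻¹ * ENNReal.ofReal ((2:ℝ) ^ ((j.1:ℝ) * (μ - α))) :=
          ENNReal.tsum_le_tsum hterm
      _ = S ^ q⁻¹ * ∑' j : {j : ℤ // k ≤ j}, ENNReal.ofReal ((2:ℝ) ^ ((j.1:ℝ) * (μ - α))) :=
          ENNReal.tsum_mul_left
      _ = _ := by rw [geom_above (μ - α) hμα' k]
  have step4 : ∀ k : ℤ,
      ENNReal.ofReal ((2:ℝ) ^ ((k:ℝ) * α * q)) *
        (∑' j : {j : ℤ // k ≤ j}, c j.1 * ENNReal.ofReal ((2:ℝ) ^ (-(j.1:ℝ) * α))) ^ q ≤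
        ENNReal.ofReal ((2:ℝ) ^ ((k:ℝ) * (μ * q)) * D) * S := by
    intro k
    set B : ℝ := (2:ℝ) ^ ((k:ℝ) * (μ - α)) * (1 - (2:ℝ) ^ (μ - α))⁻¹ with hB
    have hBpos : 0 < B := mul_pos (Real.rpow_pos_of_pos h2 _) (inv_pos.mpr h1pos)
    have h := ENNReal.rpow_le_rpow (step3 k) (le_of_lt hq0)
    rw [ENNReal.mul_rpow_of_nonneg _ _ (le_of_lt hq0), ← ENNReal.rpow_mul,
      inv_mul_cancel₀ (ne_of_gt hq0), ENNReal.rpow_one,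
      ENNReal.ofReal_rpow_of_pos hBpos] at h
    have hreal : (2:ℝ) ^ ((k:ℝ) * α * q) * B ^ q = (2:ℝ) ^ ((k:ℝ) * (μ * q)) * D := by
      rw [hB, Real.mul_rpow (le_of_lt (Real.rpow_pos_of_pos h2 _)) (le_of_lt (inv_pos.mpr h1pos)),
        ← Real.rpow_mul (le_of_lt h2), ← hD, ← mul_assoc, ← mul_assoc, ← Real.rpow_add h2]
      congr 2
      ring_nf
    calc ENNReal.ofReal ((2:ℝ) ^ ((k:ℝ) * α * q)) *
          (∑' j : {j : ℤ // k ≤ j}, c j.1 * ENNReal.ofReal ((2:ℝ) ^ (-(j.1:ℝ) * α))) ^ q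
        ≤ ENNReal.ofReal ((2:ℝ) ^ ((k:ℝ) * α * q)) * (S * ENNReal.ofReal (B ^ q)) :=
          mul_le_mul_right h _
      _ = (ENNReal.ofReal ((2:ℝ) ^ ((k:ℝ) * α * q)) * ENNReal.ofReal (B ^ q)) * S := by
          rw [mul_comm S (ENNReal.ofReal (B ^ q)), ← mul_assoc]
      _ = ENNReal.ofReal ((2:ℝ) ^ ((k:ℝ) * (μ * q)) * D) * S := by
          rw [← ENNReal.ofReal_mul (by positivity), hreal]
  apply iSup_le
  intro L
  have h5 : (∑' k : {k : ℤ // k ≤ L},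
      ENNReal.ofReal ((2:ℝ) ^ ((k.1:ℝ) * α * q)) *
        (∑' j : {j : ℤ // (k:ℤ) ≤ j},
            c j.1 * ENNReal.ofReal ((2:ℝ) ^ (-(j.1:ℝ) * α))) ^ q) ≤
      ∑' k : {k : ℤ // k ≤ L}, ENNReal.ofReal ((2:ℝ) ^ ((k.1:ℝ) * (μ * q)) * D) * S :=
    ENNReal.tsum_le_tsum (fun k => step4 k.1)
  have h6 : (∑' k : {k : ℤ // k ≤ L},
      ENNReal.ofReal ((2:ℝ) ^ ((k.1:ℝ) * (μ * q)) * D) * S) =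
      ENNReal.ofReal ((2:ℝ) ^ ((L:ℝ) * (μ * q)) * (1 - (2:ℝ) ^ (-(μ * q)))⁻¹) *
        (ENNReal.ofReal D * S) := by
    calc (∑' k : {k : ℤ // k ≤ L}, ENNReal.ofReal ((2:ℝ) ^ ((k.1:ℝ) * (μ * q)) * D) * S)
        = ∑' k : {k : ℤ // k ≤ L},
            ENNReal.ofReal ((2:ℝ) ^ ((k.1:ℝ) * (μ * q))) * (ENNReal.ofReal D * S) :=
          tsum_congr (fun k => by rw [ENNReal.ofReal_mul (by positivity), mul_assoc])
      _ = (∑' k : {k : ℤ // k ≤ L}, ENNReal.ofReal ((2:ℝ) ^ ((k.1:ℝ) * (μ * q)))) *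
            (ENNReal.ofReal D * S) := ENNReal.tsum_mul_right
      _ = _ := by rw [geom_below (μ * q) hμq L]
  have h7 : ENNReal.ofReal ((2:ℝ) ^ (-(L:ℝ) * μ * q)) *
      (ENNReal.ofReal ((2:ℝ) ^ ((L:ℝ) * (μ * q)) * (1 - (2:ℝ) ^ (-(μ * q)))⁻¹) *
        (ENNReal.ofReal D * S)) = ENNReal.ofReal (D * E) * S := by
    rw [← mul_assoc, ← ENNReal.ofReal_mul (by positivity)]
    have hone : (2:ℝ) ^ (-(L:ℝ) * μ * q) *
        ((2:ℝ) ^ ((L:ℝ) * (μ * q)) * (1 - (2:ℝ) ^ (-(μ * q)))⁻¹) = E := by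
      rw [← mul_assoc, ← Real.rpow_add h2]
      have he : -(L:ℝ) * μ * q + (L:ℝ) * (μ * q) = 0 := by ring
      rw [he, Real.rpow_zero, one_mul, hE]
    rw [hone, ← mul_assoc, ← ENNReal.ofReal_mul (le_of_lt hEpos), mul_comm E D]
  calc ENNReal.ofReal ((2:ℝ) ^ (-(L:ℝ) * μ * q)) *
        ∑' k : {k : ℤ // k ≤ L},
          ENNReal.ofReal ((2:ℝ) ^ ((k.1:ℝ) * α * q)) *
            (∑' j : {j : ℤ // (k:ℤ) ≤ j},
                c j.1 * ENNReal.ofReal ((2:ℝ) ^ (-(j.1:ℝ) * α))) ^ q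
      ≤ ENNReal.ofReal ((2:ℝ) ^ (-(L:ℝ) * μ * q)) *
          ∑' k : {k : ℤ // k ≤ L},
            ENNReal.ofReal ((2:ℝ) ^ ((k.1:ℝ) * (μ * q)) * D) * S := mul_le_mul_right h5 _
    _ = ENNReal.ofReal (D * E) * S := by rw [h6, h7]
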